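/- Let E be an n₁×n₂ random matrix with i.i.d. mean-zero Gaussian entries of variance σ². For deterministic A ∈ ℝ^{n₂×n₁}, B ∈ ℝ^{n₂×n₁}, C ∈ ℝ^{n₂×n₁}, one has E[E A E B E C E] = σ⁴ Aᵀ B Cᵀ + σ⁴ Trace(A Cᵀ) Bᵀ + σ⁴ Cᵀ B Aᵀ. -/

import Mathlib

open Matrix MeasureTheory ProbabilityTheory
open Real Set
open scoped NNReal ENNReal
set_option linter.unusedSectionVars false
set_option maxHeartbeats 1000000

lemma integral_gaussianReal_eq (v : ℝ≥0) (hv : v ≠ 0) (g : ℝ → ℝ) :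
    ∫ x, g x ∂(gaussianReal 0 v) = ∫ x, gaussianPDFReal 0 v x * g x := by
  rw [gaussianReal_of_var_ne_zero 0 hv]
  have : (gaussianPDF 0 v) = fun x => ((gaussianPDFReal 0 v x).toNNReal : ℝ≥0∞) := by
    funext x; rw [gaussianPDF_def]; rfl
  rw [this, integral_withDensity_eq_integral_smul
    ((measurable_gaussianPDFReal 0 v).real_toNNReal) g]
  congr 1 with x
  rw [NNReal.smul_def, smul_eq_mul, Real.coe_toNNReal _ (gaussianPDFReal_nonneg 0 v x)]

lemma odd_integral_zero (f : ℝ → ℝ) (hf : ∀ x, f (-x) = - f x) : ∫ x, f x = 0 := by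
  have h : ∫ x, f (-x) = ∫ x, f x := by
    calc ∫ x, f (-x) = ∫ x, f x ∂(Measure.map Neg.neg volume) :=
          (MeasureTheory.integral_map_equiv (Homeomorph.neg ℝ).toMeasurableEquiv f).symm
      _ = ∫ x, f x := by rw [Measure.map_neg_eq_self (volume : Measure ℝ)]
  simp only [hf, integral_neg] at h
  linarith

lemma even_gauss (b : ℝ) (hb : 0 < b) (k : ℕ) (hk : Even k) :
    ∫ x : ℝ, x ^ k * exp (-b * x ^ 2) = b ^ (-((k:ℝ) + 1) / 2) * Gamma (((k:ℝ) + 1) / 2) := by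
  have h1 : ∫ x : ℝ, x ^ k * exp (-b * x ^ 2)
      = 2 * ∫ x in Ioi (0:ℝ), x ^ k * exp (-b * x ^ 2) := by
    rw [← integral_comp_abs (f := fun x => x ^ k * exp (-b * x ^ 2))]
    congr 1 with x
    rw [sq_abs, hk.pow_abs]
  rw [h1]
  have h2 : ∫ x in Ioi (0:ℝ), x ^ k * exp (-b * x ^ 2)
      = ∫ x in Ioi (0:ℝ), x ^ (k:ℝ) * exp (-b * x ^ (2:ℝ)) := by
    refine setIntegral_congr_fun measurableSet_Ioi (fun x hx => ?_)
    rw [rpow_natCast, rpow_two]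
  rw [h2, integral_rpow_mul_exp_neg_mul_rpow two_pos
    (lt_of_lt_of_le neg_one_lt_zero (Nat.cast_nonneg k)) hb]
  ring

lemma gauss_moment_odd (v : ℝ≥0) (hv : v ≠ 0) (k : ℕ) (hk : Odd k) :
    ∫ x, x ^ k ∂(gaussianReal 0 v) = 0 := by
  rw [integral_gaussianReal_eq v hv]
  apply odd_integral_zero
  intro x
  rw [hk.neg_pow]
  have : gaussianPDFReal 0 v (-x) = gaussianPDFReal 0 v x := by
    simp [gaussianPDFReal, neg_sq]
  rw [this]; ring

lemma gauss_pdf_mul (v : ℝ≥0) (hv : v ≠ 0) (k : ℕ) :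
    ∫ x, x ^ k ∂(gaussianReal 0 v) =
      (√(2 * π * (v:ℝ)))⁻¹ * ∫ x : ℝ, x ^ k * exp (-((2*(v:ℝ))⁻¹) * x ^ 2) := by
  rw [integral_gaussianReal_eq v hv, ← integral_const_mul]
  congr 1 with x
  have hv' : (0:ℝ) < v := lt_of_le_of_ne v.coe_nonneg (by exact_mod_cast (Ne.symm hv))
  rw [gaussianPDFReal]
  have : -(x - 0) ^ 2 / (2 * (v:ℝ)) = -(2*(v:ℝ))⁻¹ * x ^ 2 := by
    field_simp; ring
  rw [this]; ring

lemma gauss_moment_two (v : ℝ≥0) (hv : v ≠ 0) :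
    ∫ x, x ^ 2 ∂(gaussianReal 0 v) = (v:ℝ) := by
  have hv' : (0:ℝ) < v := lt_of_le_of_ne v.coe_nonneg (by exact_mod_cast (Ne.symm hv))
  set w : ℝ := 2 * (v:ℝ) with hw
  have hw' : (0:ℝ) < w := by positivity
  rw [gauss_pdf_mul v hv 2, even_gauss _ (by positivity) 2 (by norm_num)]
  have h1 : (w⁻¹ : ℝ) ^ (-(((2:ℕ):ℝ) + 1) / 2) = w * √w := by
    rw [Real.inv_rpow hw'.le, ← Real.rpow_neg hw'.le]
    norm_num
    rw [show (3:ℝ)/2 = 1 + 1/2 by norm_num, Real.rpow_add hw', Real.rpow_one,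
      Real.sqrt_eq_rpow]
  have h2 : Gamma ((((2:ℕ):ℝ) + 1) / 2) = √π / 2 := by
    have : (((2:ℕ):ℝ) + 1) / 2 = 1/2 + 1 := by norm_num
    rw [this, Real.Gamma_add_one (by norm_num), Real.Gamma_one_half_eq]; ring
  rw [h1, h2]
  have h3 : √(2 * π * (v:ℝ)) = √π * √w := by
    rw [← Real.sqrt_mul pi_nonneg, hw]; ring_nf
  rw [h3]
  have hs : √w * √w = w := Real.mul_self_sqrt hw'.le
  have hsp : (0:ℝ) < √π := Real.sqrt_pos.mpr pi_pos
  have hsw : (0:ℝ) < √w := Real.sqrt_pos.mpr hw'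
  field_simp
  rw [hw]

lemma gauss_moment_four (v : ℝ≥0) (hv : v ≠ 0) :
    ∫ x, x ^ 4 ∂(gaussianReal 0 v) = 3 * (v:ℝ) ^ 2 := by
  have hv' : (0:ℝ) < v := lt_of_le_of_ne v.coe_nonneg (by exact_mod_cast (Ne.symm hv))
  set w : ℝ := 2 * (v:ℝ) with hw
  have hw' : (0:ℝ) < w := by positivity
  rw [gauss_pdf_mul v hv 4, even_gauss _ (by positivity) 4 ⟨2, by norm_num⟩]
  have h1 : (w⁻¹ : ℝ) ^ (-(((4:ℕ):ℝ) + 1) / 2) = w ^ 2 * √w := by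
    rw [Real.inv_rpow hw'.le, ← Real.rpow_neg hw'.le]
    norm_num
    rw [show (5:ℝ)/2 = 2 + 1/2 by norm_num, Real.rpow_add hw',
      Real.sqrt_eq_rpow, Real.rpow_two]
  have h2 : Gamma ((((4:ℕ):ℝ) + 1) / 2) = 3 * √π / 4 := by
    have e1 : (((4:ℕ):ℝ) + 1) / 2 = 3/2 + 1 := by norm_num
    have e2 : (3:ℝ)/2 = 1/2 + 1 := by norm_num
    rw [e1, Real.Gamma_add_one (by norm_num), e2, Real.Gamma_add_one (by norm_num),
      Real.Gamma_one_half_eq]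
    ring
  rw [h1, h2]
  have h3 : √(2 * π * (v:ℝ)) = √π * √w := by
    rw [← Real.sqrt_mul pi_nonneg, hw]; ring_nf
  rw [h3]
  have hs : √w * √w = w := Real.mul_self_sqrt hw'.le
  have hsp : (0:ℝ) < √π := Real.sqrt_pos.mpr pi_pos
  have hsw : (0:ℝ) < √w := Real.sqrt_pos.mpr hw'
  field_simp
  rw [hw]; ring

lemma gauss_integrable_pow (v : ℝ≥0) (hv : v ≠ 0) (k : ℕ) :
    Integrable (fun x : ℝ => x ^ k) (gaussianReal 0 v) := by
  have hv' : (0:ℝ) < v := lt_of_le_of_ne v.coe_nonneg (by exact_mod_cast (Ne.symm hv))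
  rw [gaussianReal_of_var_ne_zero 0 hv,
    integrable_withDensity_iff (measurable_gaussianPDF 0 v)
      (Filter.Eventually.of_forall fun x => ENNReal.ofReal_lt_top)]
  have : (fun x : ℝ => x ^ k * (gaussianPDF 0 v x).toReal)
      = fun x : ℝ => (√(2 * π * (v:ℝ)))⁻¹ * (x ^ k * exp (-((2*(v:ℝ))⁻¹) * x ^ 2)) := by
    funext x
    rw [gaussianPDF_def, ENNReal.toReal_ofReal (gaussianPDFReal_nonneg 0 v x), gaussianPDFReal]
    have : -(x - 0) ^ 2 / (2 * (v:ℝ)) = -(2*(v:ℝ))⁻¹ * x ^ 2 := by field_simp; ring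
    rw [this]; ring
  rw [this]
  refine Integrable.const_mul ?_ _
  have := integrable_rpow_mul_exp_neg_mul_sq (b := (2*(v:ℝ))⁻¹) (by positivity)
    (s := (k:ℝ)) (lt_of_lt_of_le neg_one_lt_zero (Nat.cast_nonneg k))
  simpa [Real.rpow_natCast] using this

section family
open ProbabilityTheory
variable {Ω : Type*} [MeasurableSpace Ω] {μ : Measure Ω} [IsProbabilityMeasure μ]
  {ι : Type*} {X : ι → Ω → ℝ} {v : ℝ≥0}

lemma mom_eq (hm : ∀ i, Measurable (X i)) (hg : ∀ i, Measure.map (X i) μ = gaussianReal 0 v)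
    (i : ι) (k : ℕ) : ∫ ω, X i ω ^ k ∂μ = ∫ x, x ^ k ∂(gaussianReal 0 v) := by
  rw [← hg i, integral_map (hm i).aemeasurable (by fun_prop)]

lemma integrable_pow (hm : ∀ i, Measurable (X i))
    (hg : ∀ i, Measure.map (X i) μ = gaussianReal 0 v) (hv : v ≠ 0) (i : ι) (k : ℕ) :
    Integrable (fun ω => X i ω ^ k) μ := by
  have := gauss_integrable_pow v hv k
  rw [← hg i] at this
  exact ((integrable_map_measure this.aestronglyMeasurable (hm i).aemeasurable).mp this :)

end family


section family
variable {Ω : Type*} [MeasurableSpace Ω] {μ : Measure Ω} [IsProbabilityMeasure μ]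
  {ι : Type*} {X : ι → Ω → ℝ} {v : ℝ≥0}

variable {Ω : Type*} [MeasurableSpace Ω] {μ : Measure Ω} [IsProbabilityMeasure μ]
  {ι : Type*} {X : ι → Ω → ℝ}

lemma abs_mul4_le (a b c d : ℝ) : |a*b*c*d| ≤ (a^4+b^4+c^4+d^4)/4 := by
  rw [abs_le]
  constructor <;> nlinarith [sq_nonneg (a*b-c*d), sq_nonneg (a*b+c*d), sq_nonneg (a^2-b^2),
    sq_nonneg (c^2-d^2), sq_nonneg (a^2+b^2), sq_nonneg (c^2+d^2)]

lemma ind2 (hindep : iIndepFun X μ) (hm : ∀ i, Measurable (X i))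
    {p q : ι} (hpq : p ≠ q) (a b : ℕ) :
    ∫ ω, X p ω ^ a * X q ω ^ b ∂μ = (∫ ω, X p ω ^ a ∂μ) * ∫ ω, X q ω ^ b ∂μ := by
  have h := (hindep.indepFun hpq).comp (measurable_id.pow_const a) (measurable_id.pow_const b)
  exact h.integral_mul_eq_mul_integral (((hm p).pow_const a).aestronglyMeasurable)
    (((hm q).pow_const b).aestronglyMeasurable)

lemma ind3 (hindep : iIndepFun X μ) (hm : ∀ i, Measurable (X i))
    {p q r : ι} (hpq : p ≠ q) (hpr : p ≠ r) (hqr : q ≠ r) (a b c : ℕ) :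
    ∫ ω, X p ω ^ a * X q ω ^ b * X r ω ^ c ∂μ
      = (∫ ω, X p ω ^ a ∂μ) * (∫ ω, X q ω ^ b ∂μ) * ∫ ω, X r ω ^ c ∂μ := by
  have h0 := hindep.indepFun_prodMk hm p q r hpr hqr
  have h := h0.comp (show Measurable fun z : ℝ × ℝ => z.1 ^ a * z.2 ^ b by fun_prop)
    (measurable_id.pow_const c)
  have key : ∫ ω, X p ω ^ a * X q ω ^ b * X r ω ^ c ∂μ
      = (∫ ω, X p ω ^ a * X q ω ^ b ∂μ) * ∫ ω, X r ω ^ c ∂μ :=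
    h.integral_mul_eq_mul_integral (((hm p).pow_const a).mul ((hm q).pow_const b)).aestronglyMeasurable
      ((hm r).pow_const c).aestronglyMeasurable
  rw [key, ind2 hindep hm hpq]

lemma ind4 (hindep : iIndepFun X μ) (hm : ∀ i, Measurable (X i))
    {p q r s : ι} (hpq : p ≠ q) (hpr : p ≠ r) (hps : p ≠ s) (hqr : q ≠ r) (hqs : q ≠ s)
    (hrs : r ≠ s) :
    ∫ ω, X p ω * X q ω * X r ω * X s ω ∂μ
      = (∫ ω, X p ω ∂μ) * (∫ ω, X q ω ∂μ) * (∫ ω, X r ω ∂μ) * ∫ ω, X s ω ∂μ := by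
  have h0 := hindep.indepFun_prodMk_prodMk hm p q r s hpr hps hqr hqs
  have h := h0.comp (show Measurable fun z : ℝ × ℝ => z.1 * z.2 by fun_prop)
    (show Measurable fun z : ℝ × ℝ => z.1 * z.2 by fun_prop)
  have key : ∫ ω, (X p ω * X q ω) * (X r ω * X s ω) ∂μ
      = (∫ ω, X p ω * X q ω ∂μ) * ∫ ω, X r ω * X s ω ∂μ :=
    h.integral_mul_eq_mul_integral ((hm p).mul (hm q)).aestronglyMeasurable
      ((hm r).mul (hm s)).aestronglyMeasurable
  have e1 := ind2 hindep hm hpq 1 1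
  have e2 := ind2 hindep hm hrs 1 1
  simp only [pow_one] at e1 e2
  simp only [mul_assoc] at key e1 e2 ⊢
  rw [key, e1, e2]; ring

lemma ind_single (hindep : iIndepFun X μ) (hm : ∀ i, Measurable (X i))
    {p q r s : ι} (hpq : p ≠ q) (hpr : p ≠ r) (hps : p ≠ s) :
    ∫ ω, X p ω * X q ω * X r ω * X s ω ∂μ
      = (∫ ω, X p ω ∂μ) * ∫ ω, X q ω * X r ω * X s ω ∂μ := by
  classical
  have h0 := hindep.indepFun_finset {p} ({q, r, s} : Finset ι)
    (by simp [Finset.disjoint_left, hpq, hpr, hps]) hm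
  have h := h0.comp (show Measurable fun v : ({p} : Finset ι) → ℝ =>
      v ⟨p, Finset.mem_singleton_self p⟩ from measurable_pi_apply _)
    (show Measurable fun v : ({q, r, s} : Finset ι) → ℝ =>
      v ⟨q, by simp⟩ * v ⟨r, by simp⟩ * v ⟨s, by simp⟩ by fun_prop)
  have key : ∫ ω, X p ω * (X q ω * X r ω * X s ω) ∂μ
      = (∫ ω, X p ω ∂μ) * ∫ ω, X q ω * X r ω * X s ω ∂μ :=
    h.integral_mul_eq_mul_integral (hm p).aestronglyMeasurable
      (((hm q).mul (hm r)).mul (hm s)).aestronglyMeasurable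
  simp only [mul_assoc] at key ⊢
  exact key

lemma mom1 (hm : ∀ i, Measurable (X i))
    (hg : ∀ i, Measure.map (X i) μ = gaussianReal 0 v) (hv : v ≠ 0) (i : ι) :
    ∫ ω, X i ω ∂μ = 0 := by
  have h := mom_eq hm hg i 1
  have h2 := gauss_moment_odd v hv 1 odd_one
  simp only [pow_one] at h h2
  rw [h, h2]

lemma mom2 (hm : ∀ i, Measurable (X i))
    (hg : ∀ i, Measure.map (X i) μ = gaussianReal 0 v) (hv : v ≠ 0) (i : ι) :
    ∫ ω, X i ω ^ 2 ∂μ = (v:ℝ) := by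
  rw [mom_eq hm hg i 2, gauss_moment_two v hv]

lemma mom3 (hm : ∀ i, Measurable (X i))
    (hg : ∀ i, Measure.map (X i) μ = gaussianReal 0 v) (hv : v ≠ 0) (i : ι) :
    ∫ ω, X i ω ^ 3 ∂μ = 0 := by
  rw [mom_eq hm hg i 3, gauss_moment_odd v hv 3 (by decide)]

lemma mom4 (hm : ∀ i, Measurable (X i))
    (hg : ∀ i, Measure.map (X i) μ = gaussianReal 0 v) (hv : v ≠ 0) (i : ι) :
    ∫ ω, X i ω ^ 4 ∂μ = 3 * (v:ℝ) ^ 2 := by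
  rw [mom_eq hm hg i 4, gauss_moment_four v hv]

lemma integrable_prod4 (hm : ∀ i, Measurable (X i))
    (hg : ∀ i, Measure.map (X i) μ = gaussianReal 0 v) (hv : v ≠ 0) (p q r s : ι) :
    Integrable (fun ω => X p ω * X q ω * X r ω * X s ω) μ := by
  have h4 : ∀ i, Integrable (fun ω => X i ω ^ 4) μ := fun i => integrable_pow hm hg hv i 4
  refine Integrable.mono'
    (g := fun ω => (X p ω ^ 4 + X q ω ^ 4 + X r ω ^ 4 + X s ω ^ 4) / 4)
    (((((h4 p).add (h4 q)).add (h4 r)).add (h4 s)).div_const 4 :)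
    ((((hm p).mul (hm q)).mul (hm r)).mul (hm s)).aestronglyMeasurable
    (Filter.Eventually.of_forall fun ω => ?_)
  rw [Real.norm_eq_abs]
  exact abs_mul4_le _ _ _ _

lemma wick [DecidableEq ι] (hindep : iIndepFun X μ) (hm : ∀ i, Measurable (X i))
    (hg : ∀ i, Measure.map (X i) μ = gaussianReal 0 v) (hv : v ≠ 0) (p q r s : ι) :
    ∫ ω, X p ω * X q ω * X r ω * X s ω ∂μ
      = (v:ℝ)^2 * ((if p = q then 1 else 0) * (if r = s then 1 else 0)
        + (if p = r then 1 else 0) * (if q = s then 1 else 0)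
        + (if p = s then 1 else 0) * (if q = r then 1 else 0)) := by
  have m1 := mom1 hm hg hv
  have m2 := mom2 hm hg hv
  have m3 := mom3 hm hg hv
  have m4 := mom4 hm hg hv
  by_cases hpq : p = q
  · subst hpq
    by_cases hpr : p = r
    · subst hpr
      by_cases hps : p = s
      · subst hps
        rw [show (fun ω => X p ω * X p ω * X p ω * X p ω) = fun ω => X p ω ^ 4 from
          funext fun ω => by ring]
        rw [m4 p]; simp; ring
      · rw [show (fun ω => X p ω * X p ω * X p ω * X s ω)
            = fun ω => X p ω ^ 3 * X s ω ^ 1 from funext fun ω => by ring]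
        rw [ind2 hindep hm hps 3 1, m3 p]
        simp [hps, Ne.symm hps]
    · by_cases hps : p = s
      · subst hps
        rw [show (fun ω => X p ω * X p ω * X r ω * X p ω)
            = fun ω => X p ω ^ 3 * X r ω ^ 1 from funext fun ω => by ring]
        rw [ind2 hindep hm hpr 3 1, m3 p]
        simp [hpr, Ne.symm hpr]
      · by_cases hrs : r = s
        · subst hrs
          rw [show (fun ω => X p ω * X p ω * X r ω * X r ω)
              = fun ω => X p ω ^ 2 * X r ω ^ 2 from funext fun ω => by ring]
          rw [ind2 hindep hm hpr 2 2, m2 p, m2 r]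
          simp [hpr]; ring
        · rw [show (fun ω => X p ω * X p ω * X r ω * X s ω)
              = fun ω => X p ω ^ 2 * X r ω ^ 1 * X s ω ^ 1 from funext fun ω => by ring]
          rw [ind3 hindep hm hpr hps hrs 2 1 1]
          simp only [pow_one, m1 r]
          simp [hrs, Ne.symm hrs, hps, Ne.symm hps, hpr, Ne.symm hpr]
  · by_cases hpr : p = r
    · subst hpr
      by_cases hqs : q = s
      · subst hqs
        rw [show (fun ω => X p ω * X q ω * X p ω * X q ω)
            = fun ω => X p ω ^ 2 * X q ω ^ 2 from funext fun ω => by ring]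
        rw [ind2 hindep hm hpq 2 2, m2 p, m2 q]
        simp [hpq]; ring
      · by_cases hps : p = s
        · subst hps
          rw [show (fun ω => X p ω * X q ω * X p ω * X p ω)
              = fun ω => X p ω ^ 3 * X q ω ^ 1 from funext fun ω => by ring]
          rw [ind2 hindep hm (fun h => hpq h) 3 1, m3 p]
          simp [hpq, Ne.symm hpq, hqs]
        · rw [show (fun ω => X p ω * X q ω * X p ω * X s ω)
              = fun ω => X p ω ^ 2 * X q ω ^ 1 * X s ω ^ 1 from funext fun ω => by ring]
          rw [ind3 hindep hm hpq hps hqs 2 1 1]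
          simp only [pow_one, m1 q]
          simp [hpq, Ne.symm hpq, hps, Ne.symm hps, hqs, Ne.symm hqs]
    · by_cases hps : p = s
      · subst hps
        by_cases hqr : q = r
        · subst hqr
          rw [show (fun ω => X p ω * X q ω * X q ω * X p ω)
              = fun ω => X p ω ^ 2 * X q ω ^ 2 from funext fun ω => by ring]
          rw [ind2 hindep hm hpq 2 2, m2 p, m2 q]
          simp [hpq, Ne.symm hpq]; ring
        · rw [show (fun ω => X p ω * X q ω * X r ω * X p ω)
              = fun ω => X p ω ^ 2 * X q ω ^ 1 * X r ω ^ 1 from funext fun ω => by ring]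
          rw [ind3 hindep hm hpq hpr hqr 2 1 1]
          simp only [pow_one, m1 q]
          simp [hpq, Ne.symm hpq, hpr, Ne.symm hpr, hqr, Ne.symm hqr]
      · rw [ind_single hindep hm hpq hpr hps, m1 p]
        simp [hpq, Ne.symm hpq, hpr, Ne.symm hpr, hps, Ne.symm hps]

end family

section sums
variable {n₁ n₂ : ℕ}
open Matrix

lemma sum1 (A B C : Matrix (Fin n₂) (Fin n₁) ℝ) (i : Fin n₁) (j : Fin n₂) :
    ∑ k6 : Fin n₁, ∑ k5 : Fin n₂, ∑ k4 : Fin n₁, ∑ k3 : Fin n₂, ∑ k2 : Fin n₁, ∑ k1 : Fin n₂,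
      A k1 k2 * B k3 k4 * C k5 k6 *
        ((if (i, k1) = (k2, k3) then (1:ℝ) else 0) * (if (k4, k5) = (k6, j) then 1 else 0))
    = (Aᵀ * B * Cᵀ) i j := by
  simp only [Prod.mk.injEq, ite_and, Matrix.mul_apply, Matrix.transpose_apply]
  simp [Finset.mul_sum, Finset.sum_mul, mul_ite, ite_mul, mul_zero, zero_mul, mul_one,
    Finset.sum_ite_eq, Finset.sum_ite_eq']

lemma sum2 (A B C : Matrix (Fin n₂) (Fin n₁) ℝ) (i : Fin n₁) (j : Fin n₂) :
    ∑ k6 : Fin n₁, ∑ k5 : Fin n₂, ∑ k4 : Fin n₁, ∑ k3 : Fin n₂, ∑ k2 : Fin n₁, ∑ k1 : Fin n₂,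
      A k1 k2 * B k3 k4 * C k5 k6 *
        ((if (i, k1) = (k4, k5) then (1:ℝ) else 0) * (if (k2, k3) = (k6, j) then 1 else 0))
    = (A * Cᵀ).trace * Bᵀ i j := by
  simp only [Prod.mk.injEq, ite_and, Matrix.mul_apply, Matrix.transpose_apply, Matrix.trace,
    Matrix.diag]
  simp [Finset.mul_sum, Finset.sum_mul, mul_ite, ite_mul, mul_zero, zero_mul, mul_one,
    Finset.sum_ite_eq, Finset.sum_ite_eq']
  rw [Finset.sum_comm]
  refine Finset.sum_congr rfl fun k _ => ?_
  refine Finset.sum_congr rfl fun l _ => ?_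
  ring

lemma sum3 (A B C : Matrix (Fin n₂) (Fin n₁) ℝ) (i : Fin n₁) (j : Fin n₂) :
    ∑ k6 : Fin n₁, ∑ k5 : Fin n₂, ∑ k4 : Fin n₁, ∑ k3 : Fin n₂, ∑ k2 : Fin n₁, ∑ k1 : Fin n₂,
      A k1 k2 * B k3 k4 * C k5 k6 *
        ((if (i, k1) = (k6, j) then (1:ℝ) else 0) * (if (k2, k3) = (k4, k5) then 1 else 0))
    = (Cᵀ * B * Aᵀ) i j := by
  simp only [Prod.mk.injEq, ite_and, Matrix.mul_apply, Matrix.transpose_apply]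
  simp [Finset.mul_sum, Finset.sum_mul, mul_ite, ite_mul, mul_zero, zero_mul, mul_one,
    Finset.sum_ite_eq, Finset.sum_ite_eq']
  rw [Finset.sum_comm]
  refine Finset.sum_congr rfl fun k _ => Finset.sum_congr rfl fun l _ => by ring

end sums

/-- if `E` is an `n₁ × n₂` random matrix with i.i.d. mean-zero Gaussian
entries of variance `σ²`, then for deterministic `A, B, C ∈ ℝ^{n₂ × n₁}`,
`𝔼[E A E B E C E] = σ⁴ Aᵀ B Cᵀ + σ⁴ Tr(A Cᵀ) Bᵀ + σ⁴ Cᵀ B Aᵀ`. -/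
theorem gaussian_expectation_fourth_8
    {Ω : Type*} [MeasurableSpace Ω] (μ : Measure Ω) [IsProbabilityMeasure μ]
    {n₁ n₂ : ℕ} (σ : ℝ) (hσ : 0 < σ)
    (E : Ω → Matrix (Fin n₁) (Fin n₂) ℝ)
    (hmeas : ∀ i j, Measurable fun ω => E ω i j)
    (hindep : iIndepFun
      (fun p : Fin n₁ × Fin n₂ => fun ω => E ω p.1 p.2) μ)
    (hgauss : ∀ i j, Measure.map (fun ω => E ω i j) μ
      = gaussianReal 0 (Real.toNNReal (σ ^ 2)))
    (A B C : Matrix (Fin n₂) (Fin n₁) ℝ) :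
    ∀ i j, ∫ ω, (E ω * A * E ω * B * E ω * C * E ω) i j ∂μ
      = σ ^ 4 * (Aᵀ * B * Cᵀ) i j
        + σ ^ 4 * (A * Cᵀ).trace * Bᵀ i j
        + σ ^ 4 * (Cᵀ * B * Aᵀ) i j := by
  intro i j
  classical
  have hv : (Real.toNNReal (σ ^ 2)) ≠ 0 :=
    ne_of_gt (Real.toNNReal_pos.mpr (by positivity))
  have hvr : ((Real.toNNReal (σ ^ 2) : ℝ≥0) : ℝ) = σ ^ 2 :=
    Real.coe_toNNReal _ (sq_nonneg σ)
  have hm : ∀ p : Fin n₁ × Fin n₂, Measurable ((fun p : Fin n₁ × Fin n₂ => fun ω => E ω p.1 p.2) p) :=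
    fun p => hmeas p.1 p.2
  have hg : ∀ p : Fin n₁ × Fin n₂,
      Measure.map ((fun p : Fin n₁ × Fin n₂ => fun ω => E ω p.1 p.2) p) μ
        = gaussianReal 0 (Real.toNNReal (σ ^ 2)) := fun p => hgauss p.1 p.2
  have W := wick hindep hm hg hv
  have IP := integrable_prod4 hm hg hv
  have expand : (fun ω => (E ω * A * E ω * B * E ω * C * E ω) i j)
      = fun ω => ∑ k6 : Fin n₁, ∑ k5 : Fin n₂, ∑ k4 : Fin n₁, ∑ k3 : Fin n₂, ∑ k2 : Fin n₁,
          ∑ k1 : Fin n₂, A k1 k2 * B k3 k4 * C k5 k6 *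
            (E ω i k1 * E ω k2 k3 * E ω k4 k5 * E ω k6 j) := by
    funext ω
    simp only [Matrix.mul_apply, Finset.sum_mul]
    refine Finset.sum_congr rfl fun k6 _ => Finset.sum_congr rfl fun k5 _ =>
      Finset.sum_congr rfl fun k4 _ => Finset.sum_congr rfl fun k3 _ =>
      Finset.sum_congr rfl fun k2 _ => Finset.sum_congr rfl fun k1 _ => by ring
  rw [show (∫ ω, (E ω * A * E ω * B * E ω * C * E ω) i j ∂μ)
      = ∫ ω, (fun ω => (E ω * A * E ω * B * E ω * C * E ω) i j) ω ∂μ from rfl, expand]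
  have merge : (fun ω => ∑ k6 : Fin n₁, ∑ k5 : Fin n₂, ∑ k4 : Fin n₁, ∑ k3 : Fin n₂,
          ∑ k2 : Fin n₁, ∑ k1 : Fin n₂, A k1 k2 * B k3 k4 * C k5 k6 *
            (E ω i k1 * E ω k2 k3 * E ω k4 k5 * E ω k6 j))
      = fun ω => ∑ k : Fin n₁ × Fin n₂ × Fin n₁ × Fin n₂ × Fin n₁ × Fin n₂,
          A k.2.2.2.2.2 k.2.2.2.2.1 * B k.2.2.2.1 k.2.2.1 * C k.2.1 k.1 *
            (E ω i k.2.2.2.2.2 * E ω k.2.2.2.2.1 k.2.2.2.1 * E ω k.2.2.1 k.2.1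
              * E ω k.1 j) := by
    funext ω
    rw [Fintype.sum_prod_type]
    refine Finset.sum_congr rfl fun k6 _ => ?_
    rw [Fintype.sum_prod_type]
    refine Finset.sum_congr rfl fun k5 _ => ?_
    rw [Fintype.sum_prod_type]
    refine Finset.sum_congr rfl fun k4 _ => ?_
    rw [Fintype.sum_prod_type]
    refine Finset.sum_congr rfl fun k3 _ => ?_
    rw [Fintype.sum_prod_type]
  rw [merge, integral_finset_sum _ (fun (k : Fin n₁ × Fin n₂ × Fin n₁ × Fin n₂ × Fin n₁ × Fin n₂) _ => ((IP (i, k.2.2.2.2.2)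
      (k.2.2.2.2.1, k.2.2.2.1) (k.2.2.1, k.2.1) (k.1, j)).const_mul
      (A k.2.2.2.2.2 k.2.2.2.2.1 * B k.2.2.2.1 k.2.2.1 * C k.2.1 k.1) :))]
  have step : ∀ k : Fin n₁ × Fin n₂ × Fin n₁ × Fin n₂ × Fin n₁ × Fin n₂,
      ∫ ω, A k.2.2.2.2.2 k.2.2.2.2.1 * B k.2.2.2.1 k.2.2.1 * C k.2.1 k.1 *
          (E ω i k.2.2.2.2.2 * E ω k.2.2.2.2.1 k.2.2.2.1 * E ω k.2.2.1 k.2.1 * E ω k.1 j) ∂μ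
        = A k.2.2.2.2.2 k.2.2.2.2.1 * B k.2.2.2.1 k.2.2.1 * C k.2.1 k.1 *
          ((σ^2)^2 * ((if ((i : Fin n₁), k.2.2.2.2.2) = (k.2.2.2.2.1, k.2.2.2.1) then (1:ℝ) else 0)
              * (if ((k.2.2.1 : Fin n₁), k.2.1) = (k.1, j) then 1 else 0)
            + (if ((i : Fin n₁), k.2.2.2.2.2) = (k.2.2.1, k.2.1) then 1 else 0)
              * (if ((k.2.2.2.2.1 : Fin n₁), k.2.2.2.1) = (k.1, j) then 1 else 0)
            + (if ((i : Fin n₁), k.2.2.2.2.2) = (k.1, j) then 1 else 0)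
              * (if ((k.2.2.2.2.1 : Fin n₁), k.2.2.2.1) = (k.2.2.1, k.2.1) then 1 else 0))) := by
    intro k
    rw [MeasureTheory.integral_const_mul]
    rw [W (i, k.2.2.2.2.2) (k.2.2.2.2.1, k.2.2.2.1) (k.2.2.1, k.2.1) (k.1, j), hvr]
  rw [Finset.sum_congr rfl fun k _ => step k]
  have split : ∑ k : Fin n₁ × Fin n₂ × Fin n₁ × Fin n₂ × Fin n₁ × Fin n₂,
      A k.2.2.2.2.2 k.2.2.2.2.1 * B k.2.2.2.1 k.2.2.1 * C k.2.1 k.1 *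
        ((σ^2)^2 * ((if ((i : Fin n₁), k.2.2.2.2.2) = (k.2.2.2.2.1, k.2.2.2.1) then (1:ℝ) else 0)
            * (if ((k.2.2.1 : Fin n₁), k.2.1) = (k.1, j) then 1 else 0)
          + (if ((i : Fin n₁), k.2.2.2.2.2) = (k.2.2.1, k.2.1) then 1 else 0)
            * (if ((k.2.2.2.2.1 : Fin n₁), k.2.2.2.1) = (k.1, j) then 1 else 0)
          + (if ((i : Fin n₁), k.2.2.2.2.2) = (k.1, j) then 1 else 0)
            * (if ((k.2.2.2.2.1 : Fin n₁), k.2.2.2.1) = (k.2.2.1, k.2.1) then 1 else 0)))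
    = (σ^2)^2 * (∑ k6 : Fin n₁, ∑ k5 : Fin n₂, ∑ k4 : Fin n₁, ∑ k3 : Fin n₂, ∑ k2 : Fin n₁,
        ∑ k1 : Fin n₂, A k1 k2 * B k3 k4 * C k5 k6 *
          ((if (i, k1) = (k2, k3) then (1:ℝ) else 0) * (if (k4, k5) = (k6, j) then 1 else 0)))
      + (σ^2)^2 * (∑ k6 : Fin n₁, ∑ k5 : Fin n₂, ∑ k4 : Fin n₁, ∑ k3 : Fin n₂, ∑ k2 : Fin n₁,
        ∑ k1 : Fin n₂, A k1 k2 * B k3 k4 * C k5 k6 *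
          ((if (i, k1) = (k4, k5) then (1:ℝ) else 0) * (if (k2, k3) = (k6, j) then 1 else 0)))
      + (σ^2)^2 * (∑ k6 : Fin n₁, ∑ k5 : Fin n₂, ∑ k4 : Fin n₁, ∑ k3 : Fin n₂, ∑ k2 : Fin n₁,
        ∑ k1 : Fin n₂, A k1 k2 * B k3 k4 * C k5 k6 *
          ((if (i, k1) = (k6, j) then (1:ℝ) else 0) * (if (k2, k3) = (k4, k5) then 1 else 0))) := by
    rw [Fintype.sum_prod_type]
    simp only [Fintype.sum_prod_type]
    simp only [Finset.mul_sum, ← Finset.sum_add_distrib]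
    refine Finset.sum_congr rfl fun k6 _ => Finset.sum_congr rfl fun k5 _ =>
      Finset.sum_congr rfl fun k4 _ => Finset.sum_congr rfl fun k3 _ =>
      Finset.sum_congr rfl fun k2 _ => Finset.sum_congr rfl fun k1 _ => by ring
  rw [split, sum1 A B C i j, sum2 A B C i j, sum3 A B C i j]
  ring
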